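/- Let F = FreeGroup α be the free group on a type α having two distinct elements, let H = ℤ × F, and let H' be a finite-index subgroup of H. Suppose A and B are nontrivial subgroups of H with A ≤ H', B ≤ H', every element of A commuting with every element of B, A ⊓ B = ⊥, and A ⊔ B = H'. Then, after possibly interchanging A and B, the following hold: A = H' ∩ (ℤ × {1}); B ∩ (ℤ × {1}) = ⊥, so the projection homomorphism ℤ × F → F onto the second factor is injective on B; and the image of B under this projection is a finite-index subgroup of F. -/

import Mathlib

open FreeGroup in
lemma freegroup_central_aux {β : Type*} (w : FreeGroup β) (hw : w ≠ 1)
    (hcw : ∀ r : β, Commute w (FreeGroup.of r)) (hβ : ∃ s t : β, s ≠ t) : False := by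
  classical
  set L := w.toWord with hL
  have hLne : L ≠ [] := by simpa [hL, FreeGroup.toWord_eq_nil_iff] using hw
  obtain ⟨hd, tl, hcons⟩ := List.exists_cons_of_ne_nil hLne
  obtain ⟨s, t, hst⟩ := hβ
  have hex : ∃ h : β, h ≠ hd.1 := by
    by_cases hgs : hd.1 = s
    · exact ⟨t, fun ht => hst (hgs.symm.trans ht.symm)⟩
    · exact ⟨s, fun hs => hgs hs.symm⟩
  obtain ⟨h, hhg⟩ := hex
  have hgl : L.getLast hLne ∈ L := List.getLast_mem hLne
  obtain ⟨e, hcancel⟩ : ∃ e : Bool,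
      ¬((L.getLast hLne).1 = h ∧ (L.getLast hLne).2 = !e) := by
    by_cases hq : (L.getLast hLne).1 = h
    · exact ⟨(L.getLast hLne).2, by simp⟩
    · exact ⟨true, fun hc => hq hc.1⟩
  have hcu : ∀ e' : Bool, w * FreeGroup.mk [(h, e')] = FreeGroup.mk [(h, e')] * w := by
    intro e'
    have h1 : Commute w (FreeGroup.of h) := hcw h
    cases e'
    · have h2 : FreeGroup.mk [(h, false)] = (FreeGroup.of h)⁻¹ := by
        show FreeGroup.mk [(h, false)] = (FreeGroup.mk [(h, true)])⁻¹
        rw [FreeGroup.inv_mk]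
        simp [FreeGroup.invRev]
      rw [h2]; exact (h1.inv_right).eq
    · exact h1.eq
  have hredL : FreeGroup.reduce L = L := by rw [hL]; exact FreeGroup.reduce_toWord w
  set u : FreeGroup β := FreeGroup.mk [(h, e)] with hu
  have huw : (u * w).toWord = (h, e) :: L := by
    have h2 : u * w = FreeGroup.mk ((h, e) :: L) := by
      rw [hu]
      conv_lhs => rw [← FreeGroup.mk_toWord (x := w)]
      rw [FreeGroup.mul_mk]
      rfl
    rw [h2, FreeGroup.toWord_mk, FreeGroup.reduce.cons, hredL, hcons]
    show (if (h, e).1 = hd.1 ∧ (h, e).2 = !hd.2 then tl else (h, e) :: hd :: tl)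
        = (h, e) :: hd :: tl
    rw [if_neg]
    rintro ⟨h1, -⟩; exact hhg h1
  -- compute toWord (w * u) via inverses
  have hwu : (w * u).toWord = L ++ [(h, e)] := by
    have hsingle : FreeGroup.invRev [(h, e)] = [(h, !e)] := by simp [FreeGroup.invRev]
    have hinv : (w * u)⁻¹ = FreeGroup.mk ((h, !e) :: FreeGroup.invRev L) := by
      rw [mul_inv_rev, hu, FreeGroup.inv_mk, hsingle]
      conv_lhs => rw [← FreeGroup.mk_toWord (x := w⁻¹)]
      rw [FreeGroup.toWord_inv, ← hL, FreeGroup.mul_mk]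
      rfl
    have hredinv : FreeGroup.reduce (FreeGroup.invRev L) = FreeGroup.invRev L := by
      have := FreeGroup.reduce_toWord w⁻¹
      rwa [FreeGroup.toWord_inv, ← hL] at this
    have hinvcons : FreeGroup.invRev L =
        ((L.getLast hLne).1, !(L.getLast hLne).2) :: FreeGroup.invRev L.dropLast := by
      conv_lhs => rw [← List.dropLast_append_getLast hLne]
      simp [FreeGroup.invRev]
    have hword : ((w * u)⁻¹).toWord = (h, !e) :: FreeGroup.invRev L := by
      rw [hinv, FreeGroup.toWord_mk, FreeGroup.reduce.cons, hredinv, hinvcons]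
      show (if (h, !e).1 = ((L.getLast hLne).1, !(L.getLast hLne).2).1 ∧
            (h, !e).2 = !((L.getLast hLne).1, !(L.getLast hLne).2).2 then
            FreeGroup.invRev L.dropLast
          else (h, !e) :: ((L.getLast hLne).1, !(L.getLast hLne).2) ::
            FreeGroup.invRev L.dropLast)
          = (h, !e) :: ((L.getLast hLne).1, !(L.getLast hLne).2) ::
            FreeGroup.invRev L.dropLast
      rw [if_neg]
      rintro ⟨h1, h2⟩
      simp only [Bool.not_not] at h2
      exact hcancel ⟨h1.symm, h2.symm⟩
    have h3 := congrArg FreeGroup.invRev hword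
    rw [← FreeGroup.toWord_inv, inv_inv] at h3
    have h4 : FreeGroup.invRev ((h, !e) :: FreeGroup.invRev L)
        = L ++ [(h, e)] := by
      simp only [FreeGroup.invRev, List.map_cons, List.reverse_cons, Bool.not_not]
      congr 1
      have := FreeGroup.invRev_invRev (L₁ := L)
      simpa [FreeGroup.invRev] using this
    rw [h3, h4]
  rw [hcu e, ← hu] at hwu
  rw [huw, hcons] at hwu
  have hhd : (h, e) = hd := (List.cons_eq_cons.mp hwu).1
  exact hhg (congrArg Prod.fst hhd)

lemma freegroup_subsingleton_comm {β : Type*} [Subsingleton β]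
    (x y : FreeGroup β) : Commute x y := by
  induction x using FreeGroup.induction_on with
  | C1 => exact Commute.one_left y
  | of s =>
    induction y using FreeGroup.induction_on with
    | C1 => exact Commute.one_right _
    | of t => rw [Subsingleton.elim s t]
    | inv_of t h => exact h.inv_right
    | mul u v hu hv => exact hu.mul_right hv
  | inv_of s h => exact h.inv_left
  | mul u v hu hv => exact hu.mul_left hv

lemma isFreeGroup_comm_of_central {G : Type*} [Group G] [IsFreeGroup G]
    (c : G) (hc : c ≠ 1) (hcent : ∀ g : G, Commute c g) (u v : G) : Commute u v := by
  classical
  let e := IsFreeGroup.toFreeGroup (G := G)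
  by_cases hsub : ∀ s t : IsFreeGroup.Generators G, s = t
  · have : Subsingleton (IsFreeGroup.Generators G) := ⟨hsub⟩
    have := freegroup_subsingleton_comm (e u) (e v)
    have h2 : e (u * v) = e (v * u) := by
      simp only [map_mul]
      exact this
    exact e.injective h2
  · push_neg at hsub
    exfalso
    refine freegroup_central_aux (e c) ?_ ?_ hsub
    · simpa using fun h => hc (by simpa using e.injective (by simpa using h))
    · intro r
      have := hcent (e.symm (FreeGroup.of r))
      have h2 := congrArg e this.eq
      simp only [map_mul, MulEquiv.apply_symm_apply] at h2
      exact h2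

/-- Commutative transitivity of free groups. -/
lemma freegroup_commute_trans {β : Type*} {x y z : FreeGroup β} (hx : x ≠ 1)
    (hxy : Commute x y) (hxz : Commute x z) : Commute y z := by
  classical
  set K := Subgroup.closure ({x, y, z} : Set (FreeGroup β)) with hK
  have hxK : x ∈ K := Subgroup.subset_closure (by simp)
  have hyK : y ∈ K := Subgroup.subset_closure (by simp)
  have hzK : z ∈ K := Subgroup.subset_closure (by simp)
  have hcent : ∀ k : K, Commute (⟨x, hxK⟩ : K) k := by
    rintro ⟨k, hk⟩
    have : k ∈ Subgroup.centralizer ({x} : Set (FreeGroup β)) := by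
      have hsubset : ({x, y, z} : Set (FreeGroup β)) ⊆ Subgroup.centralizer {x} := by
        rintro w hw
        simp only [Set.mem_insert_iff, Set.mem_singleton_iff] at hw
        rcases hw with rfl | rfl | rfl
        · exact Subgroup.mem_centralizer_iff.mpr (by rintro g hg; rw [Set.mem_singleton_iff] at hg; subst hg; rfl)
        · exact Subgroup.mem_centralizer_iff.mpr (by rintro g hg; rw [Set.mem_singleton_iff] at hg; subst hg; exact hxy.eq)
        · exact Subgroup.mem_centralizer_iff.mpr (by rintro g hg; rw [Set.mem_singleton_iff] at hg; subst hg; exact hxz.eq)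
      exact (Subgroup.closure_le _).mpr hsubset hk
    have h2 := Subgroup.mem_centralizer_iff.mp this x (Set.mem_singleton x)
    exact Subtype.ext (by simpa [Commute, SemiconjBy] using h2)
  have hcomm := isFreeGroup_comm_of_central (G := K) ⟨x, hxK⟩
    (by simpa using hx) hcent ⟨y, hyK⟩ ⟨z, hzK⟩
  have := congrArg (Subtype.val) hcomm.eq
  simpa [Commute, SemiconjBy] using this

private def matX : (Matrix (Fin 2) (Fin 2) ℤ)ˣ where
  val := !![1, 1; 0, 1]
  inv := !![1, -1; 0, 1]
  val_inv := by simp [Matrix.mul_fin_two, Matrix.one_fin_two]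
  inv_val := by simp [Matrix.mul_fin_two, Matrix.one_fin_two]

private def matY : (Matrix (Fin 2) (Fin 2) ℤ)ˣ where
  val := !![1, 0; 1, 1]
  inv := !![1, 0; -1, 1]
  val_inv := by simp [Matrix.mul_fin_two, Matrix.one_fin_two]
  inv_val := by simp [Matrix.mul_fin_two, Matrix.one_fin_two]

private lemma matX_pow (n : ℕ) : ((matX ^ n : (Matrix (Fin 2) (Fin 2) ℤ)ˣ) : Matrix (Fin 2) (Fin 2) ℤ) = !![1, (n : ℤ); 0, 1] := by
  induction n with
  | zero => simp [Matrix.one_fin_two]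
  | succ n ih =>
    rw [pow_succ, Units.val_mul, ih]
    show _ * matX.val = _
    simp [matX, Matrix.mul_fin_two]
    try push_cast
    try ring

private lemma matY_pow (n : ℕ) : ((matY ^ n : (Matrix (Fin 2) (Fin 2) ℤ)ˣ) : Matrix (Fin 2) (Fin 2) ℤ) = !![1, 0; (n : ℤ), 1] := by
  induction n with
  | zero => simp [Matrix.one_fin_two]
  | succ n ih =>
    rw [pow_succ, Units.val_mul, ih]
    show _ * matY.val = _
    simp [matY, Matrix.mul_fin_two]
    try push_cast
    try ring

private lemma not_commute_matXY {n m : ℕ} (hn : 0 < n) (hm : 0 < m) :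
    ¬ Commute (matX ^ n) (matY ^ m) := by
  intro hc
  have h2 : (!![1,(n:ℤ);0,1] * !![1,0;(m:ℤ),1]) = (!![1,0;(m:ℤ),1] * !![1,(n:ℤ);0,1]) := by
    rw [← matX_pow n, ← matY_pow m, ← Units.val_mul, ← Units.val_mul, hc.eq]
  rw [Matrix.mul_fin_two, Matrix.mul_fin_two] at h2
  have h3 := congrFun (congrFun h2 0) 0
  simp at h3
  rcases h3 with h3 | h3 <;> omega

lemma freegroup_pow_not_commute {α : Type*} {a b : α} (hab : a ≠ b) {n m : ℕ}
    (hn : 0 < n) (hm : 0 < m) :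
    ¬ Commute ((FreeGroup.of a) ^ n) ((FreeGroup.of b) ^ m) := by
  classical
  intro hc
  set φ := FreeGroup.lift (fun x : α => if x = a then matX else matY) with hφ
  have hca := (hc.map φ)
  have hφa : φ (FreeGroup.of a) = matX := by simp [hφ]
  have hφb : φ (FreeGroup.of b) = matY := by simp [hφ, hab.symm]
  rw [map_pow, map_pow, hφa, hφb] at hca
  exact not_commute_matXY hn hm hca

/-- decomposition of elements of a join of elementwise-commuting subgroups -/
lemma mem_sup_decomp {G : Type*} [Group G] {A B : Subgroup G}
    (hcomm : ∀ x ∈ A, ∀ y ∈ B, Commute x y) {h : G} (hh : h ∈ A ⊔ B) :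
    ∃ x ∈ A, ∃ y ∈ B, x * y = h := by
  have hh' : h ∈ Subgroup.closure ((A : Set G) ∪ B) := by
    rwa [Subgroup.closure_union, Subgroup.closure_eq, Subgroup.closure_eq]
  clear hh
  induction hh' using Subgroup.closure_induction with
  | mem x hx =>
    rcases hx with hx | hx
    · exact ⟨x, hx, 1, one_mem _, mul_one x⟩
    · exact ⟨1, one_mem _, x, hx, one_mul x⟩
  | one => exact ⟨1, one_mem _, 1, one_mem _, one_mul 1⟩
  | mul x y hx hy ihx ihy =>
    obtain ⟨x1, hx1, y1, hy1, rfl⟩ := ihx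
    obtain ⟨x2, hx2, y2, hy2, rfl⟩ := ihy
    refine ⟨x1 * x2, mul_mem hx1 hx2, y1 * y2, mul_mem hy1 hy2, ?_⟩
    have hc := (hcomm x2 hx2 y1 hy1).symm
    group
    rw [mul_assoc x1, ← hc.eq, ← mul_assoc x1]
  | inv x hx ihx =>
    obtain ⟨x1, hx1, y1, hy1, rfl⟩ := ihx
    refine ⟨x1⁻¹, inv_mem hx1, y1⁻¹, inv_mem hy1, ?_⟩
    rw [mul_inv_rev, (hcomm x1 hx1 y1 hy1).inv_inv.eq]

section Main

variable {α : Type*}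

local notation "p" => MonoidHom.snd (Multiplicative ℤ) (FreeGroup α)
local notation "Z" => Subgroup.prod (⊤ : Subgroup (Multiplicative ℤ)) (⊥ : Subgroup (FreeGroup α))

lemma mem_Z_iff (x : Multiplicative ℤ × FreeGroup α) : x ∈ Z ↔ x.2 = 1 := by
  simp [Subgroup.mem_prod, Subgroup.mem_bot]

lemma main_side (H' A B : Subgroup (Multiplicative ℤ × FreeGroup α)) (hfi : H'.index ≠ 0)
    (hA : A ≠ ⊥) (hAH : A ≤ H') (hBH : B ≤ H')
    (hcomm : ∀ x ∈ A, ∀ y ∈ B, Commute x y)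
    (hinf : A ⊓ B = ⊥) (hsup : A ⊔ B = H') (hAZ : A ≤ Z) :
    A = H' ⊓ Z ∧ B ⊓ Z = ⊥ ∧
      Set.InjOn p (B : Set (Multiplicative ℤ × FreeGroup α)) ∧
      (Subgroup.map p B).index ≠ 0 := by
  -- B meets Z trivially
  have hBZ : B ⊓ Z = ⊥ := by
    rw [eq_bot_iff]
    rintro z ⟨hzB, hzZ⟩
    rw [Subgroup.mem_bot]
    by_contra hz1
    obtain ⟨a0, ha0A, ha0⟩ := A.bot_or_exists_ne_one.resolve_left hA
    have ha2 : a0.2 = 1 := (mem_Z_iff a0).mp (hAZ ha0A)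
    have hz2 : z.2 = 1 := (mem_Z_iff z).mp hzZ
    set i := Multiplicative.toAdd a0.1 with hi
    set j := Multiplicative.toAdd z.1 with hj
    have hine : i ≠ 0 := by
      intro h0
      exact ha0 (Prod.ext (Multiplicative.toAdd.injective
        (by rw [Prod.fst_one, toAdd_one]; exact h0)) ha2)
    have hjne : j ≠ 0 := by
      intro h0
      exact hz1 (Prod.ext (Multiplicative.toAdd.injective
        (by rw [Prod.fst_one, toAdd_one]; exact h0)) hz2)
    have key : a0 ^ j = z ^ i := by
      apply Prod.ext
      · show a0.1 ^ j = z.1 ^ i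
        apply Multiplicative.toAdd.injective
        rw [toAdd_zpow, toAdd_zpow]
        simp only [smul_eq_mul, ← hi, ← hj]
        ring
      · show a0.2 ^ j = z.2 ^ i
        rw [ha2, hz2, one_zpow, one_zpow]
    have hmem : a0 ^ j ∈ A ⊓ B := ⟨A.zpow_mem ha0A j, key ▸ B.zpow_mem hzB i⟩
    rw [hinf, Subgroup.mem_bot] at hmem
    have : a0.1 ^ j = 1 := by
      have := congrArg Prod.fst hmem
      simpa using this
    have := congrArg Multiplicative.toAdd this
    rw [toAdd_zpow] at this
    simp only [smul_eq_mul, ← hi, toAdd_one] at this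
    exact hjne (by rcases mul_eq_zero.mp this with h | h; exact h; exact absurd h hine)
  have hBZ' : ∀ y : Multiplicative ℤ × FreeGroup α, y ∈ B → y.2 = 1 → y = 1 := by
    intro y hyB hy2
    have : y ∈ B ⊓ Z := ⟨hyB, (mem_Z_iff y).mpr hy2⟩
    rwa [hBZ, Subgroup.mem_bot] at this
  refine ⟨?_, hBZ, ?_, ?_⟩
  · -- A = H' ⊓ Z
    apply le_antisymm (le_inf hAH hAZ)
    rintro h ⟨hH, hZ⟩
    obtain ⟨x, hxA, y, hyB, hxy⟩ := mem_sup_decomp hcomm (hsup.symm ▸ hH : h ∈ A ⊔ B)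
    have hx2 : x.2 = 1 := (mem_Z_iff x).mp (hAZ hxA)
    have hy2 : y.2 = 1 := by
      have h2 : h.2 = x.2 * y.2 := by rw [← hxy]; rfl
      rw [(mem_Z_iff h).mp hZ, hx2, one_mul] at h2
      exact h2.symm
    have : y = 1 := hBZ' y hyB hy2
    rw [this, mul_one] at hxy
    rwa [← hxy]
  · -- injectivity on B
    intro x hx y hy hxy
    have hmem : x⁻¹ * y ∈ B := mul_mem (inv_mem hx) hy
    have h2 : (x⁻¹ * y).2 = 1 := by
      show x.2⁻¹ * y.2 = 1
      rw [show x.2 = y.2 from hxy, inv_mul_cancel]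
    have := hBZ' _ hmem h2
    exact inv_mul_eq_one.mp this |>.symm ▸ rfl
  · -- finite index of image
    have hsurj : Function.Surjective p := Prod.snd_surjective
    have hdvd := Subgroup.index_map_dvd (H := H') hsurj
    have hne : (Subgroup.map p H').index ≠ 0 := by
      intro h0
      rw [h0] at hdvd
      exact hfi (Nat.eq_zero_of_zero_dvd hdvd)
    have hker : A ≤ (p).ker := by
      intro x hx
      rw [MonoidHom.mem_ker]
      exact (mem_Z_iff x).mp (hAZ hx)
    have : Subgroup.map p H' = Subgroup.map p B := by
      rw [← hsup, Subgroup.map_sup, (Subgroup.map_eq_bot_iff _).mpr hker, bot_sup_eq]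
    rwa [this] at hne

end Main

section Main2

variable {α : Type*}

local notation "p" => MonoidHom.snd (Multiplicative ℤ) (FreeGroup α)
local notation "Z" => Subgroup.prod (⊤ : Subgroup (Multiplicative ℤ)) (⊥ : Subgroup (FreeGroup α))

lemma dichotomy (a b : α) (hab : a ≠ b)
    (H' A B : Subgroup (Multiplicative ℤ × FreeGroup α)) (hfi : H'.index ≠ 0)
    (hcomm : ∀ x ∈ A, ∀ y ∈ B, Commute x y) (hsup : A ⊔ B = H') :
    A ≤ Z ∨ B ≤ Z := by
  by_contra hcon
  push_neg at hcon
  obtain ⟨hA1, hB1⟩ := hcon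
  obtain ⟨x, hxA, hxZ⟩ := SetLike.not_le_iff_exists.mp hA1
  obtain ⟨y, hyB, hyZ⟩ := SetLike.not_le_iff_exists.mp hB1
  have hx2 : x.2 ≠ 1 := fun h => hxZ ((mem_Z_iff x).mpr h)
  have hy2 : y.2 ≠ 1 := fun h => hyZ ((mem_Z_iff y).mpr h)
  have hx2B : x.2 ∈ Subgroup.map p A := ⟨x, hxA, rfl⟩
  have hy2B : y.2 ∈ Subgroup.map p B := ⟨y, hyB, rfl⟩
  -- all elements of the images commute pairwise
  have pair1 : ∀ u ∈ Subgroup.map p A, ∀ v ∈ Subgroup.map p B, Commute u v := by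
    rintro u ⟨x', hx', rfl⟩ v ⟨y', hy', rfl⟩
    exact (hcomm x' hx' y' hy').map p
  have pairA : ∀ u ∈ Subgroup.map p A, ∀ u' ∈ Subgroup.map p A, Commute u u' := by
    intro u hu u' hu'
    exact freegroup_commute_trans hy2 (pair1 u hu _ hy2B).symm (pair1 u' hu' _ hy2B).symm
  have pairB : ∀ v ∈ Subgroup.map p B, ∀ v' ∈ Subgroup.map p B, Commute v v' := by
    intro v hv v' hv'
    exact freegroup_commute_trans hx2 (pair1 _ hx2B v hv) (pair1 _ hx2B v' hv')
  have pairU : ∀ u ∈ (Subgroup.map p A : Set (FreeGroup α)) ∪ Subgroup.map p B,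
      ∀ v ∈ (Subgroup.map p A : Set (FreeGroup α)) ∪ Subgroup.map p B, Commute u v := by
    rintro u (hu | hu) v (hv | hv)
    · exact pairA u hu v hv
    · exact pair1 u hu v hv
    · exact (pair1 v hv u hu).symm
    · exact pairB u hu v hv
  have hJeq : Subgroup.map p A ⊔ Subgroup.map p B =
      Subgroup.closure ((Subgroup.map p A : Set (FreeGroup α)) ∪ Subgroup.map p B) := by
    rw [Subgroup.closure_union, Subgroup.closure_eq, Subgroup.closure_eq]
  have step1 : ∀ u ∈ (Subgroup.map p A : Set (FreeGroup α)) ∪ Subgroup.map p B,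
      ∀ k ∈ Subgroup.map p A ⊔ Subgroup.map p B, Commute u k := by
    intro u hu k hk
    rw [hJeq] at hk
    have : k ∈ Subgroup.centralizer {u} := by
      refine (Subgroup.closure_le _).mpr ?_ hk
      intro v hv
      exact Subgroup.mem_centralizer_iff.mpr
        (by rintro g hg; rw [Set.mem_singleton_iff] at hg; rw [hg]; exact (pairU u hu v hv).eq)
    exact Subgroup.mem_centralizer_iff.mp this u (Set.mem_singleton u)
  have hIm : ∀ k ∈ Subgroup.map p H', ∀ k' ∈ Subgroup.map p H', Commute k k' := by
    have hmap : Subgroup.map p H' = Subgroup.map p A ⊔ Subgroup.map p B := by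
      rw [← hsup, Subgroup.map_sup]
    intro k hk k' hk'
    rw [hmap] at hk hk'
    have : k' ∈ Subgroup.centralizer {k} := by
      rw [hJeq] at hk'
      refine (Subgroup.closure_le _).mpr ?_ hk'
      intro v hv
      exact Subgroup.mem_centralizer_iff.mpr
        (by rintro g hg; rw [Set.mem_singleton_iff] at hg; rw [hg];
            exact (step1 v hv k hk).symm.eq)
    exact Subgroup.mem_centralizer_iff.mp this k (Set.mem_singleton k)
  -- finite index of the image
  have hsurj : Function.Surjective p := Prod.snd_surjective
  have hdvd := Subgroup.index_map_dvd (H := H') hsurj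
  have hne : (Subgroup.map p H').index ≠ 0 := by
    intro h0
    rw [h0] at hdvd
    exact hfi (Nat.eq_zero_of_zero_dvd hdvd)
  obtain ⟨n, hn, -, hna⟩ := Subgroup.exists_pow_mem_of_index_ne_zero hne (FreeGroup.of a)
  obtain ⟨m, hm, -, hmb⟩ := Subgroup.exists_pow_mem_of_index_ne_zero hne (FreeGroup.of b)
  exact freegroup_pow_not_commute hab hn hm (hIm _ hna _ hmb)

end Main2



/-- In any internal direct product decomposition `H' = A × B` of a finite-index
subgroup `H'` of `ℤ × FreeGroup α` into two nontrivial factors, after possibly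
interchanging `A` and `B`: `A = H' ∩ (ℤ × {1})`, `B` meets `ℤ × {1}` trivially
(so the projection onto the second factor is injective on `B`), and the image
of `B` under that projection has finite index in `FreeGroup α`. -/
theorem direct_factor_identification {α : Type*} (a b : α) (hab : a ≠ b)
    (H' A B : Subgroup (Multiplicative ℤ × FreeGroup α)) (hfi : H'.index ≠ 0)
    (hA : A ≠ ⊥) (hB : B ≠ ⊥) (hAH : A ≤ H') (hBH : B ≤ H')
    (hcomm : ∀ x ∈ A, ∀ y ∈ B, Commute x y)
    (hinf : A ⊓ B = ⊥) (hsup : A ⊔ B = H') :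
    (A = H' ⊓ Subgroup.prod (⊤ : Subgroup (Multiplicative ℤ))
        (⊥ : Subgroup (FreeGroup α)) ∧
      B ⊓ Subgroup.prod (⊤ : Subgroup (Multiplicative ℤ))
        (⊥ : Subgroup (FreeGroup α)) = ⊥ ∧
      Set.InjOn (MonoidHom.snd (Multiplicative ℤ) (FreeGroup α))
        (B : Set (Multiplicative ℤ × FreeGroup α)) ∧
      (Subgroup.map (MonoidHom.snd (Multiplicative ℤ) (FreeGroup α)) B).index ≠ 0) ∨
    (B = H' ⊓ Subgroup.prod (⊤ : Subgroup (Multiplicative ℤ))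
        (⊥ : Subgroup (FreeGroup α)) ∧
      A ⊓ Subgroup.prod (⊤ : Subgroup (Multiplicative ℤ))
        (⊥ : Subgroup (FreeGroup α)) = ⊥ ∧
      Set.InjOn (MonoidHom.snd (Multiplicative ℤ) (FreeGroup α))
        (A : Set (Multiplicative ℤ × FreeGroup α)) ∧
      (Subgroup.map (MonoidHom.snd (Multiplicative ℤ) (FreeGroup α)) A).index ≠ 0) := by
  rcases dichotomy a b hab H' A B hfi hcomm hsup with hAZ | hBZ
  · exact Or.inl (main_side H' A B hfi hA hAH hBH hcomm hinf hsup hAZ)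
  · refine Or.inr (main_side H' B A hfi hB hBH hAH ?_ ?_ ?_ hBZ)
    · exact fun y hy x hx => (hcomm x hx y hy).symm
    · rw [inf_comm]; exact hinf
    · rw [sup_comm]; exact hsup
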